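/- Let q, h, a : ℝ → E³ together with a conical curvature κ : ℝ → ℝ be a Frenet frame of a ruled surface, where κ is a constant function with value κ₀ ≠ 0, and let W(s) = κ₀·q(s) + a(s) be the Darboux vector. Let u ∈ E³ be a fixed nonzero vector and C ∈ ℝ with ⟪W(s), u⟫ = C for all s (the surface is Darboux slant). Then the function s ↦ ⟪h(s), u⟫ is constant (the surface is h-slant with axis u) if and only if ⟪a(s), u⟫ = C / (1 + κ₀²) for all s (the surface is a-slant with axis u and constant angle λ given by cos λ = C/(1+κ₀²)). -/
import Mathlib


open RealInnerProductSpace Matrix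

noncomputable section

abbrev E3 := EuclideanSpace ℝ (Fin 3)

/-- A Frenet frame of a ruled surface: `q`, `h`, `a` are orthonormal at every
parameter and satisfy the Frenet equations with conical curvature `κ`. -/
def IsFrenetFrame (q h a : ℝ → E3) (κ : ℝ → ℝ) : Prop :=
  (∀ s, ⟪q s, q s⟫ = 1 ∧ ⟪h s, h s⟫ = 1 ∧ ⟪a s, a s⟫ = 1 ∧
        ⟪q s, h s⟫ = 0 ∧ ⟪q s, a s⟫ = 0 ∧ ⟪h s, a s⟫ = 0) ∧
  (∀ s, HasDerivAt q (h s) s) ∧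
  (∀ s, HasDerivAt h (-q s + κ s • a s) s) ∧
  (∀ s, HasDerivAt a (-(κ s • h s)) s)

/-- The Darboux vector of the frame. -/
def darboux (q a : ℝ → E3) (κ : ℝ → ℝ) : ℝ → E3 := fun s => κ s • q s + a s

theorem h_slant_iff_a_slant
    (q h a : ℝ → E3) (κ : ℝ → ℝ)
    (hframe : IsFrenetFrame q h a κ)
    (κ₀ : ℝ) (hκ₀ : κ₀ ≠ 0) (hκconst : ∀ s, κ s = κ₀)
    (u : E3) (hu : u ≠ 0) (C : ℝ)
    (hW : ∀ s, ⟪κ₀ • q s + a s, u⟫ = C) :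
    (∃ c : ℝ, ∀ s, ⟪h s, u⟫ = c) ↔ (∀ s, ⟪a s, u⟫ = C / (1 + κ₀ ^ 2)) := by
  obtain ⟨horth, hq', hh', ha'⟩ := hframe
  have hden : (1 + κ₀ ^ 2) ≠ 0 := by positivity
  have hWs : ∀ s, κ₀ * ⟪q s, u⟫ + ⟪a s, u⟫ = C := by
    intro s
    have := hW s
    rwa [inner_add_left, real_inner_smul_left] at this
  constructor
  · rintro ⟨c, hc⟩ s
    -- derivative of ⟪h·,u⟫ is both 0 and ⟪-q s + κ₀•a s, u⟫
    have hfun : (fun t => ⟪h t, u⟫) = fun _ => c := funext hc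
    have d0 : HasDerivAt (fun t => ⟪h t, u⟫) 0 s := by
      rw [hfun]; exact hasDerivAt_const s c
    have d1 : HasDerivAt (fun t => ⟪h t, u⟫) (⟪h s, (0 : E3)⟫ + ⟪-q s + κ s • a s, u⟫) s :=
      (hh' s).inner ℝ (hasDerivAt_const s u)
    have heq : ⟪h s, (0 : E3)⟫ + ⟪-q s + κ s • a s, u⟫ = 0 := d1.unique d0
    rw [inner_zero_right, zero_add, inner_add_left, inner_neg_left,
      real_inner_smul_left, hκconst s] at heq
    have hW' := hWs s
    have hq : ⟪q s, u⟫ = κ₀ * ⟪a s, u⟫ := by linarith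
    rw [hq] at hW'
    rw [eq_div_iff hden]
    nlinarith [hW']
  · intro ha
    refine ⟨0, fun s => ?_⟩
    have hqconst : ∀ t, ⟪q t, u⟫ = (C - C / (1 + κ₀ ^ 2)) / κ₀ := by
      intro t
      have := hWs t
      rw [ha t] at this
      rw [eq_div_iff hκ₀]
      linarith [mul_comm κ₀ (⟪q t, u⟫)]
    have hfun : (fun t => ⟪q t, u⟫) = fun _ => (C - C / (1 + κ₀ ^ 2)) / κ₀ :=
      funext hqconst
    have d0 : HasDerivAt (fun t => ⟪q t, u⟫) 0 s := by
      rw [hfun]; exact hasDerivAt_const s _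
    have d1 : HasDerivAt (fun t => ⟪q t, u⟫) (⟪q s, (0 : E3)⟫ + ⟪h s, u⟫) s :=
      (hq' s).inner ℝ (hasDerivAt_const s u)
    have heq : ⟪q s, (0 : E3)⟫ + ⟪h s, u⟫ = 0 := d1.unique d0
    rwa [inner_zero_right, zero_add] at heq
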